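/- Let R be an almost Dedekind domain and I a nonzero integral ideal of R. Then ν_I is a bounded function on Max(R) if and only if rad(I)^k ⊆ I for some positive integer k. -/

import Mathlib

def AlmostDedekind (R : Type*) [CommRing R] [IsDomain R] : Prop :=
  ∀ M : MaximalSpectrum R, IsDiscreteValuationRing (Localization.AtPrime M.asIdeal)

theorem aux_radical_map_le {R S : Type*} [CommRing R] [CommRing S] (M : Submonoid R) [Algebra R S]
    [IsLocalization M S] (J : Ideal R) :
    (J.map (algebraMap R S)).radical ≤ J.radical.map (algebraMap R S) := by
  intro y hy
  obtain ⟨x, s, rfl⟩ := IsLocalization.mk'_surjective M y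
  obtain ⟨j, hj⟩ := hy
  rw [← IsLocalization.mk'_pow, IsLocalization.mk'_mem_map_algebraMap_iff M] at hj
  obtain ⟨t, htM, ht⟩ := hj
  rw [IsLocalization.mk'_mem_map_algebraMap_iff M]
  refine ⟨t, htM, j + 1, ?_⟩
  rw [show (t * x.1) ^ (j + 1) = (t ^ j * x.1) * (t * x.1 ^ j) by ring]
  exact J.mul_mem_left _ ht

theorem aux_comap_map_le {R : Type*} [CommRing R] (P : Ideal R) [P.IsPrime] (J : Ideal R)
    (hJ : J.IsPrimary) (hrad : J.radical ≤ P) :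
    Ideal.comap (algebraMap R (Localization.AtPrime P))
      (J.map (algebraMap R (Localization.AtPrime P))) ≤ J := by
  intro x hx
  rw [Ideal.mem_comap, ← IsLocalization.mk'_one (M := P.primeCompl) (Localization.AtPrime P) x,
    IsLocalization.mk'_mem_map_algebraMap_iff P.primeCompl] at hx
  obtain ⟨s, hs, hsx⟩ := hx
  rw [mul_comm] at hsx
  rcases (Ideal.isPrimary_iff.mp hJ).2 hsx with h | h
  · exact h
  · exact absurd (hrad h) hs

theorem aux_le_nzd {R : Type*} [CommRing R] [IsDomain R] (P : Ideal R) [P.IsPrime] :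
    P.primeCompl ≤ nonZeroDivisors R :=
  fun _ hs => mem_nonZeroDivisors_of_ne_zero (fun h0 => hs (h0 ▸ P.zero_mem))

theorem aux_pow_le_pow {S : Type*} [CommRing S] [IsDomain S] [IsDiscreteValuationRing S] {a b : ℕ}
    (h : (IsLocalRing.maximalIdeal S) ^ a ≤ (IsLocalRing.maximalIdeal S) ^ b) : b ≤ a := by
  obtain ⟨ϖ, hirr⟩ := IsDiscreteValuationRing.exists_irreducible S
  rw [hirr.maximalIdeal_eq, Ideal.span_singleton_pow, Ideal.span_singleton_pow,
    Ideal.span_singleton_le_span_singleton] at h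
  exact (pow_dvd_pow_iff hirr.ne_zero hirr.not_isUnit).mp h

theorem aux_map_eq_pow {R : Type*} [CommRing R] [IsDomain R] (P : Ideal R) [hP : P.IsMaximal]
    (hD : IsDiscreteValuationRing (Localization.AtPrime P))
    (I : Ideal R) (hI : I ≠ ⊥) (n : ℕ) (hn : I ≤ P ^ n) (hn' : ¬ I ≤ P ^ (n + 1)) :
    I.map (algebraMap R (Localization.AtPrime P)) =
      (IsLocalRing.maximalIdeal (Localization.AtPrime P)) ^ n := by
  have hinj : Function.Injective (algebraMap R (Localization.AtPrime P)) :=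
    IsLocalization.injective _ (aux_le_nzd P)
  have hbot : I.map (algebraMap R (Localization.AtPrime P)) ≠ ⊥ := by
    rw [Ne, Ideal.map_eq_bot_iff_of_injective hinj]; exact hI
  obtain ⟨ϖ, hirr⟩ := IsDiscreteValuationRing.exists_irreducible (Localization.AtPrime P)
  obtain ⟨t, hteq⟩ := IsDiscreteValuationRing.ideal_eq_span_pow_irreducible hbot hirr
  have hm : ∀ j : ℕ, (IsLocalRing.maximalIdeal (Localization.AtPrime P)) ^ j =
      Ideal.span {ϖ ^ j} := by
    intro j; rw [hirr.maximalIdeal_eq, Ideal.span_singleton_pow]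
  have hmapP : ∀ j : ℕ, Ideal.map (algebraMap R (Localization.AtPrime P)) (P ^ j) =
      (IsLocalRing.maximalIdeal (Localization.AtPrime P)) ^ j := by
    intro j; rw [Ideal.map_pow, Localization.AtPrime.map_eq_maximalIdeal]
  have hrad : (P ^ (n + 1)).radical = P := by
    rw [Ideal.radical_pow _ (Nat.succ_ne_zero n), hP.isPrime.radical]
  have ht : t ≤ n := by
    by_contra hcon
    push_neg at hcon
    apply hn'
    have h1 : I.map (algebraMap R (Localization.AtPrime P)) ≤
        Ideal.map (algebraMap R (Localization.AtPrime P)) (P ^ (n + 1)) := by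
      rw [hmapP, hm, hteq, Ideal.span_singleton_le_span_singleton]
      exact pow_dvd_pow ϖ hcon
    have h2 : I ≤ Ideal.comap (algebraMap R (Localization.AtPrime P))
        (Ideal.map (algebraMap R (Localization.AtPrime P)) (P ^ (n + 1))) :=
      le_trans Ideal.le_comap_map (Ideal.comap_mono h1)
    exact le_trans h2 (aux_comap_map_le P (P ^ (n + 1))
      (Ideal.isPrimary_of_isMaximal_radical (by rw [hrad]; exact hP)) (le_of_eq hrad))
  refine le_antisymm ?_ ?_
  · rw [← hmapP]; exact Ideal.map_mono hn
  · rw [hteq, hm, Ideal.span_singleton_le_span_singleton]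
    exact pow_dvd_pow ϖ ht

/-- Let `R` be an almost Dedekind domain and `I` a nonzero integral ideal.  For each
maximal ideal `M`, `ν M` is the exponent of `I R_M = (M R_M)^(ν M)`, characterized as
the greatest `n` with `I ⊆ M ^ n`.  Then `ν` is bounded on `Max(R)` if and only if
`rad(I)^k ⊆ I` for some positive integer `k`. -/
theorem stmt5 {R : Type*} [CommRing R] [IsDomain R] (hR : AlmostDedekind R)
    (I : Ideal R) (hI : I ≠ ⊥)
    (ν : MaximalSpectrum R → ℤ)
    (hν : ∀ M : MaximalSpectrum R, 0 ≤ ν M ∧ I ≤ M.asIdeal ^ (ν M).toNat ∧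
      ¬ I ≤ M.asIdeal ^ ((ν M).toNat + 1)) :
    (∃ N : ℤ, ∀ M : MaximalSpectrum R, ν M ≤ N) ↔
      ∃ k : ℕ, 0 < k ∧ I.radical ^ k ≤ I := by
  constructor
  · rintro ⟨N, hN⟩
    refine ⟨N.toNat + 1, Nat.succ_pos _, ?_⟩
    apply Ideal.le_of_localization_maximal
    intro P hP
    haveI := hP
    have hD := hR ⟨P, hP⟩
    obtain ⟨h0, h1, h2⟩ := hν ⟨P, hP⟩
    set n := (ν ⟨P, hP⟩).toNat with hn
    simp only [MaximalSpectrum.asIdeal] at h1 h2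
    have hloc := aux_map_eq_pow P hD I hI n h1 h2
    rw [Ideal.map_pow, hloc]
    by_cases hc : n = 0
    · rw [hc, pow_zero, Ideal.one_eq_top]; exact le_top
    · have hIP : Ideal.map (algebraMap R (Localization.AtPrime P)) I.radical ≤
          IsLocalRing.maximalIdeal (Localization.AtPrime P) := by
        rw [← Localization.AtPrime.map_eq_maximalIdeal]
        exact Ideal.map_mono (hP.isPrime.radical_le_iff.mpr
          (le_trans h1 (Ideal.pow_le_self hc)))
      have hnk : n ≤ N.toNat + 1 := by
        have h3 := hN ⟨P, hP⟩
        omega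
      calc Ideal.map (algebraMap R (Localization.AtPrime P)) I.radical ^ (N.toNat + 1)
          ≤ (IsLocalRing.maximalIdeal (Localization.AtPrime P)) ^ (N.toNat + 1) :=
            Ideal.pow_right_mono hIP _
        _ ≤ (IsLocalRing.maximalIdeal (Localization.AtPrime P)) ^ n :=
            Ideal.pow_le_pow_right hnk
  · rintro ⟨k, hk, hradk⟩
    refine ⟨(k : ℤ), fun M => ?_⟩
    obtain ⟨h0, h1, h2⟩ := hν M
    have hD := hR M
    set P := M.asIdeal with hPdef
    set n := (ν M).toNat with hn
    by_cases hc : n = 0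
    · omega
    · have hloc := aux_map_eq_pow P hD I hI n h1 h2
      have hm_le : IsLocalRing.maximalIdeal (Localization.AtPrime P) ≤
          I.radical.map (algebraMap R (Localization.AtPrime P)) := by
        have h3 : IsLocalRing.maximalIdeal (Localization.AtPrime P) =
            (I.map (algebraMap R (Localization.AtPrime P))).radical := by
          rw [hloc, Ideal.radical_pow _ hc,
            (IsLocalRing.maximalIdeal.isMaximal _).isPrime.radical]
        rw [h3]
        exact aux_radical_map_le P.primeCompl _
      have hmain : (IsLocalRing.maximalIdeal (Localization.AtPrime P)) ^ k ≤
          (IsLocalRing.maximalIdeal (Localization.AtPrime P)) ^ n := by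
        calc (IsLocalRing.maximalIdeal (Localization.AtPrime P)) ^ k
            ≤ (I.radical.map (algebraMap R (Localization.AtPrime P))) ^ k :=
              Ideal.pow_right_mono hm_le _
          _ = (I.radical ^ k).map (algebraMap R (Localization.AtPrime P)) :=
              (Ideal.map_pow _ _ _).symm
          _ ≤ I.map (algebraMap R (Localization.AtPrime P)) := Ideal.map_mono hradk
          _ = (IsLocalRing.maximalIdeal (Localization.AtPrime P)) ^ n := hloc
      have := aux_pow_le_pow hmain
      omega
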